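/- Let p be a nonzero symmetric multivariate polynomial in ν variables over the complex numbers all of whose coefficients are integers (i.e., lie in the image of ℤ in ℂ). Then there exists a polynomial q in ν variables with integer coefficients such that p = q composed with the elementary symmetric polynomials, and the weight of q is at most the total degree of p. -/

import Mathlib

/-- The weight of a multivariate polynomial: the maximum over its monomials
`X_1^{k_1} ⋯ X_ν^{k_ν}` of `∑ i, i * k_i` (variables counted from 1). -/
def mweight {R : Type*} [CommRing R] {n : ℕ} (q : MvPolynomial (Fin n) R) : ℕ :=
  q.support.sup (fun m => ∑ i : Fin n, (i.1 + 1) * m i)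

open MvPolynomial AddMonoidAlgebra Finset

section Aux
variable {n : ℕ}

lemma sum_accumulate (t : Fin n → ℕ) :
    ∑ j : Fin n, Fin.accumulate n n t j = ∑ i : Fin n, (i.1 + 1) * t i := by
  simp_rw [Fin.accumulate_apply, Finset.sum_filter]
  rw [Finset.sum_comm]
  refine Finset.sum_congr rfl fun i _ => ?_
  rw [← Finset.sum_filter]
  have h : (univ.filter fun j : Fin n => j.1 ≤ i.1) = Finset.Iic i := by
    ext j
    simp only [Finset.mem_filter, Finset.mem_Iic, Finset.mem_univ, true_and, Fin.le_def]
  rw [Finset.sum_const, h, Fin.card_Iic, smul_eq_mul]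

lemma totalDegree_X_le' {R : Type*} [CommSemiring R] (i : Fin n) :
    (X i : MvPolynomial (Fin n) R).totalDegree ≤ 1 := by
  rw [X]
  exact (totalDegree_monomial_le _ _).trans (by simp)

lemma totalDegree_esymm_le {R : Type*} [CommSemiring R] (k : ℕ) :
    (esymm (Fin n) R k).totalDegree ≤ k := by
  rw [esymm]
  refine (totalDegree_finset_sum _ _).trans (Finset.sup_le fun s hs => ?_)
  refine (totalDegree_finset_prod _ _).trans ?_
  calc ∑ i ∈ s, (X i : MvPolynomial (Fin n) R).totalDegree
      ≤ ∑ i ∈ s, 1 := Finset.sum_le_sum fun i _ => totalDegree_X_le' i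
    _ = s.card := by simp
    _ = k := (Finset.mem_powersetCard.1 hs).2

lemma totalDegree_EAHM_le {R : Type*} [CommRing R] (t : Fin n →₀ ℕ) (r : R) :
    (esymmAlgHomMonomial (Fin n) t r).totalDegree ≤ ∑ i : Fin n, (i.1 + 1) * t i := by
  induction t using Finsupp.induction₂ with
  | zero => simp [esymmAlgHom_zero]
  | add_single i k f hf hk ih =>
    rw [esymmAlgHomMonomial_add, esymmAlgHomMonomial_single_one]
    refine (totalDegree_mul _ _).trans ?_
    have h2 : ((esymm (Fin n) R (i.1+1)) ^ k).totalDegree ≤ k * (i.1 + 1) :=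
      (totalDegree_pow _ _).trans (by
        exact Nat.mul_le_mul_left k (totalDegree_esymm_le _))
    have h3 : ∑ j : Fin n, (j.1 + 1) * (f + Finsupp.single i k) j
        = (∑ j : Fin n, (j.1 + 1) * f j) + (i.1 + 1) * k := by
      simp_rw [Finsupp.add_apply, mul_add, Finset.sum_add_distrib]
      congr 1
      rw [Finset.sum_eq_single i] <;> simp [Finsupp.single_apply]
      intro j hj; simp [Finsupp.single_apply, Ne.symm hj]
    rw [h3, Nat.mul_comm (i.1+1) k]
    exact Nat.add_le_add ih h2


set_option synthInstance.maxHeartbeats 1000000 in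
lemma mweight_le_aux (q : MvPolynomial (Fin n) ℤ) (hq : q ≠ 0) :
    q.support.sup (fun m => ∑ i : Fin n, (i.1 + 1) * m i)
      ≤ ((esymmAlgHom (Fin n) ℤ n q : MvPolynomial (Fin n) ℤ)).totalDegree := by
  set w := q.support.sup (fun m => ∑ i : Fin n, (i.1 + 1) * m i) with hw
  have hsupp : q.support.Nonempty := Finset.nonempty_iff_ne_empty.mpr (by rwa [Ne, MvPolynomial.support_eq_empty])
  obtain ⟨t₀, ht₀, hwt₀⟩ := Finset.exists_mem_eq_sup _ hsupp
    (fun m => ∑ i : Fin n, (i.1 + 1) * m i)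
  set S := q.support.filter (fun m => ∑ i : Fin n, (i.1 + 1) * m i = w) with hS
  have hSne : S.Nonempty := ⟨t₀, Finset.mem_filter.2 ⟨ht₀, hwt₀.symm⟩⟩
  set A : (Fin n →₀ ℕ) → Lex (Fin n →₀ ℕ) :=
    fun m => toLex (Finsupp.equivFunOnFinite.symm (Fin.accumulate n n m)) with hA
  obtain ⟨t, htS, hmax⟩ := Finset.exists_max_image S A hSne
  have ht : t ∈ q.support := (Finset.mem_filter.1 htS).1
  have htw : ∑ i : Fin n, (i.1 + 1) * t i = w := (Finset.mem_filter.1 htS).2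
  set d : Fin n →₀ ℕ := Finsupp.equivFunOnFinite.symm (Fin.accumulate n n t) with hd
  have hdcoe : ⇑d = Fin.accumulate n n t := rfl
  have hsumd : ∑ j : Fin n, d j = w := by
    rw [show (fun j => d j) = Fin.accumulate n n ⇑t from hdcoe]
    rw [sum_accumulate, htw]
  have hsup : ∀ t' : Fin n →₀ ℕ, q.coeff t' ≠ 0 →
      (esymmAlgHomMonomial (Fin n) t' (q.coeff t')).supDegree toLex = A t' := by
    intro t' h
    have h1 := supDegree_esymmAlgHomMonomial (m := n) h t' le_rfl
    have h2 : ofLex ((esymmAlgHomMonomial (Fin n) t' (q.coeff t')).supDegree toLex)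
        = Finsupp.equivFunOnFinite.symm (Fin.accumulate n n ⇑t') :=
      DFunLike.coe_injective h1
    rw [hA]
    exact congrArg toLex h2
  have hval : (esymmAlgHom (Fin n) ℤ n q : MvPolynomial (Fin n) ℤ)
      = ∑ t' ∈ q.support, esymmAlgHomMonomial (Fin n) t' (q.coeff t') := by
    conv_lhs => rw [q.as_sum]
    rw [map_sum (esymmAlgHom (Fin n) ℤ n), AddSubmonoidClass.coe_finset_sum]
    rfl
  have hcoeff : MvPolynomial.coeff d (esymmAlgHom (Fin n) ℤ n q : MvPolynomial (Fin n) ℤ)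
      = q.coeff t := by
    rw [hval, MvPolynomial.coeff_sum]
    rw [Finset.sum_eq_single_of_mem t ht]
    · have hr : q.coeff t ≠ 0 := MvPolynomial.mem_support_iff.1 ht
      have h1 := leadingCoeff_esymmAlgHomMonomial (r := q.coeff t) t (le_rfl : n ≤ n)
      rw [leadingCoeff, hsup t hr] at h1
      have hinv : Function.invFun (toLex : (Fin n →₀ ℕ) → Lex (Fin n →₀ ℕ)) (A t) = d :=
        Function.leftInverse_invFun toLex.injective d
      rw [hinv] at h1
      exact h1
    · intro t' ht' hne
      have hr' : q.coeff t' ≠ 0 := MvPolynomial.mem_support_iff.1 ht'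
      by_contra hcne
      by_cases hcase : ∑ i : Fin n, (i.1 + 1) * t' i = w
      · have ht'S : t' ∈ S := Finset.mem_filter.2 ⟨ht', hcase⟩
        have hlt : A t' < A t := by
          refine lt_of_le_of_ne (hmax t' ht'S) fun he => hne ?_
          have h0 : Fin.accumulate n n ⇑t' = Fin.accumulate n n ⇑t :=
            Finsupp.equivFunOnFinite.symm.injective (toLex.injective he)
          exact DFunLike.coe_injective (Fin.accumulate_injective le_rfl h0)
        have hle : toLex d ≤ (esymmAlgHomMonomial (Fin n) t' (q.coeff t')).supDegree toLex :=
          Finset.le_sup (Finsupp.mem_support_iff.2 hcne)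
        rw [hsup t' hr'] at hle
        exact (hle.trans_lt hlt).false
      · have hlt : ∑ i : Fin n, (i.1 + 1) * t' i < w :=
          lt_of_le_of_ne (Finset.le_sup (f := fun m => ∑ i : Fin n, (i.1 + 1) * m i) ht') hcase
        have hdeg := totalDegree_EAHM_le t' (q.coeff t')
        have hmem : d ∈ (esymmAlgHomMonomial (Fin n) t' (q.coeff t')).support :=
          MvPolynomial.mem_support_iff.2 hcne
        have hg := MvPolynomial.le_totalDegree hmem
        have hsum : (d.sum fun _ e => e) = ∑ j : Fin n, d j :=
          Finsupp.sum_fintype _ _ fun _ => rfl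
        omega
  have hmem : d ∈ (esymmAlgHom (Fin n) ℤ n q : MvPolynomial (Fin n) ℤ).support :=
    MvPolynomial.mem_support_iff.2 (hcoeff ▸ MvPolynomial.mem_support_iff.1 ht)
  have hg := MvPolynomial.le_totalDegree hmem
  have hsum : (d.sum fun _ e => e) = ∑ j : Fin n, d j :=
    Finsupp.sum_fintype _ _ fun _ => rfl
  omega

end Aux

section Final
variable {ν : ℕ}

set_option synthInstance.maxHeartbeats 1000000 in
lemma map_esymmAlgHom_val (q : MvPolynomial (Fin ν) ℤ) :
    MvPolynomial.map (Int.castRingHom ℂ)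
        ((esymmAlgHom (Fin ν) ℤ ν q : MvPolynomial (Fin ν) ℤ))
      = MvPolynomial.bind₁ (fun i : Fin ν => MvPolynomial.esymm (Fin ν) ℂ (i.1 + 1))
          (MvPolynomial.map (Int.castRingHom ℂ) q) := by
  induction q using MvPolynomial.induction_on with
  | C a =>
    simp [esymmAlgHom_apply, aeval_C, algebraMap_eq]
  | add p q hp hq =>
    rw [show ((esymmAlgHom (Fin ν) ℤ ν (p + q) : MvPolynomial (Fin ν) ℤ))
        = (esymmAlgHom (Fin ν) ℤ ν p : MvPolynomial (Fin ν) ℤ)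
          + (esymmAlgHom (Fin ν) ℤ ν q : MvPolynomial (Fin ν) ℤ) from
      congrArg Subtype.val (map_add (esymmAlgHom (Fin ν) ℤ ν) p q)]
    rw [map_add, map_add, map_add, hp, hq]
  | mul_X p i hp =>
    rw [show ((esymmAlgHom (Fin ν) ℤ ν (p * X i) : MvPolynomial (Fin ν) ℤ))
        = (esymmAlgHom (Fin ν) ℤ ν p : MvPolynomial (Fin ν) ℤ)
          * (esymmAlgHom (Fin ν) ℤ ν (X i) : MvPolynomial (Fin ν) ℤ) from
      congrArg Subtype.val (map_mul (esymmAlgHom (Fin ν) ℤ ν) p (X i))]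
    rw [map_mul, map_mul, map_mul, hp]
    congr 1
    have : ((esymmAlgHom (Fin ν) ℤ ν (X i) : MvPolynomial (Fin ν) ℤ))
        = esymm (Fin ν) ℤ (i.1 + 1) := by
      rw [esymmAlgHom_apply, aeval_X]
    rw [this, map_esymm, map_X, bind₁_X_right]

end Final

theorem mpolysym (ν : ℕ) (p : MvPolynomial (Fin ν) ℂ)
    (hint : ∀ m, p.coeff m ∈ Set.range ((↑·) : ℤ → ℂ))
    (hsym : p.IsSymmetric) (hp0 : p ≠ 0) :
    ∃ q : MvPolynomial (Fin ν) ℤ,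
      p = MvPolynomial.bind₁
            (fun i : Fin ν => MvPolynomial.esymm (Fin ν) ℂ (i.1 + 1))
            (MvPolynomial.map (Int.castRingHom ℂ) q) ∧
      mweight q ≤ p.totalDegree := by
  classical
  choose c hcc using hint
  set p₀ : MvPolynomial (Fin ν) ℤ := ∑ m ∈ p.support, MvPolynomial.monomial m (c m) with hp₀
  have hmap : MvPolynomial.map (Int.castRingHom ℂ) p₀ = p := by
    rw [hp₀, map_sum]
    rw [Finset.sum_congr rfl (fun m _ => by
      rw [MvPolynomial.map_monomial,
        show ((Int.castRingHom ℂ) (c m)) = p.coeff m from hcc m])]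
    exact p.as_sum.symm
  have hinj : Function.Injective (Int.castRingHom ℂ) := fun a b h => by
    have : (a : ℂ) = (b : ℂ) := h
    exact_mod_cast this
  have hsym₀ : p₀.IsSymmetric := by
    intro e
    apply MvPolynomial.map_injective _ hinj
    rw [MvPolynomial.map_rename, hmap]
    exact hsym e
  obtain ⟨q, hq⟩ := (MvPolynomial.esymmAlgHom_fin_bijective ℤ ν).2
    ⟨p₀, (MvPolynomial.mem_symmetricSubalgebra p₀).2 hsym₀⟩
  have hqv : (MvPolynomial.esymmAlgHom (Fin ν) ℤ ν q : MvPolynomial (Fin ν) ℤ) = p₀ :=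
    congrArg Subtype.val hq
  have hq0 : q ≠ 0 := by
    rintro rfl
    apply hp0
    rw [← hmap, ← hqv, map_zero]
    simp
  refine ⟨q, ?_, ?_⟩
  · rw [← hmap, ← hqv, map_esymmAlgHom_val]
  · have h1 := mweight_le_aux q hq0
    rw [hqv] at h1
    have h2 : p.totalDegree = p₀.totalDegree := by
      rw [← hmap, MvPolynomial.totalDegree, MvPolynomial.totalDegree,
        MvPolynomial.support_map_of_injective _ hinj]
    rw [mweight, h2]
    exact h1
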